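/- With the notation of the fractional Beatty setup: if q = 2, then r(N) ∈ {⌊p/2⌋, ⌈p/2⌉} for every positive integer N. -/

import Mathlib

/-- The number of positive integers `n` with `⌊n·α + β⌋ = N`, i.e. the multiplicity
of `N` in the Beatty sequence `S(α,β)`. -/
noncomputable def beattyCount (α β : ℝ) (N : ℤ) : ℕ :=
  Nat.card {n : ℕ // 0 < n ∧ ⌊(n : ℝ) * α + β⌋ = N}

/-- `r(N)`: the number of pairs `(i, n)`, `i ∈ {1,2}`, `n ≥ 1`, with `⌊n·αᵢ⌋ = N`. -/
noncomputable def fracBeattyR (α₁ α₂ : ℝ) (N : ℤ) : ℕ :=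
  beattyCount α₁ 0 N + beattyCount α₂ 0 N

/-- An integer is never equal to `M/α` for `α` irrational and `M` a nonzero integer. -/
lemma ne_div_of_irrational {α : ℝ} (hα : α ≠ 0) (hi : Irrational α) {M : ℤ} (hM : M ≠ 0)
    (n : ℤ) : (n : ℝ) ≠ (M : ℝ) / α := by
  intro h
  have hMne : (M : ℝ) ≠ 0 := Int.cast_ne_zero.mpr hM
  have hMn : (M : ℝ) = n * α := by
    field_simp at h
    linarith
  have hn : n ≠ 0 := by
    rintro rfl
    simp at hMn
    exact hM hMn
  have hn' : (n : ℝ) ≠ 0 := Int.cast_ne_zero.mpr hn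
  have hαeq : α = (M : ℝ) / n := by
    rw [eq_div_iff hn']
    linarith [hMn]
  exact (irrational_iff_ne_rational α).mp hi M n hn hαeq

/-- The Beatty multiplicity as a difference of floors. -/
lemma beattyCount_eq {α : ℝ} (hα : 0 < α) (hi : Irrational α) {N : ℤ} (hN : 1 ≤ N) :
    (beattyCount α 0 N : ℤ) = ⌊((N : ℝ) + 1) / α⌋ - ⌊(N : ℝ) / α⌋ := by
  have hα' : α ≠ 0 := ne_of_gt hα
  set a := ⌊(N : ℝ) / α⌋ with ha
  set b := ⌊((N : ℝ) + 1) / α⌋ with hb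
  have ha0 : 0 ≤ a := Int.floor_nonneg.mpr (by positivity)
  have hab : a ≤ b := Int.floor_le_floor (by gcongr <;> linarith)
  have key : ∀ n : ℕ, (0 < n ∧ ⌊(n : ℝ) * α + 0⌋ = N) ↔ n ∈ Finset.Ioc a.toNat b.toNat := by
    intro n
    have hne1 : (n : ℝ) ≠ (N : ℝ) / α := by
      have := ne_div_of_irrational hα' hi (M := N) (by omega) (n : ℤ)
      simpa using this
    have hne2 : (n : ℝ) ≠ ((N : ℝ) + 1) / α := by
      have := ne_div_of_irrational hα' hi (M := N + 1) (by omega) (n : ℤ)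
      push_cast at this
      simpa using this
    have main : ⌊(n : ℝ) * α⌋ = N ↔ ((N : ℝ) / α ≤ n ∧ (n : ℝ) < ((N : ℝ) + 1) / α) := by
      rw [Int.floor_eq_iff]
      constructor
      · rintro ⟨u, v⟩
        exact ⟨(div_le_iff₀ hα).mpr u, (lt_div_iff₀ hα).mpr (by push_cast at v ⊢; linarith)⟩
      · rintro ⟨u, v⟩
        refine ⟨(div_le_iff₀ hα).mp u, ?_⟩
        have := (lt_div_iff₀ hα).mp v
        push_cast
        linarith
    have e1 : a < (n : ℤ) ↔ (N : ℝ) / α ≤ n := by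
      rw [ha, Int.floor_lt]
      push_cast
      constructor
      · exact le_of_lt
      · intro h
        exact lt_of_le_of_ne h hne1.symm
    have e2 : (n : ℤ) ≤ b ↔ (n : ℝ) < ((N : ℝ) + 1) / α := by
      rw [hb, Int.le_floor]
      push_cast
      constructor
      · intro h
        exact lt_of_le_of_ne h hne2
      · exact le_of_lt
    rw [Finset.mem_Ioc, add_zero]
    constructor
    · rintro ⟨hn0, hfl⟩
      obtain ⟨u, v⟩ := main.mp hfl
      have h1 := e1.mpr u
      have h2 := e2.mpr v
      omega
    · intro hmem
      have h1 : a < (n : ℤ) := by omega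
      have h2 : (n : ℤ) ≤ b := by omega
      exact ⟨by omega, main.mpr ⟨e1.mp h1, e2.mp h2⟩⟩
  have hcard : beattyCount α 0 N = (Finset.Ioc a.toNat b.toNat).card := by
    rw [beattyCount]
    exact (Nat.card_congr (Equiv.subtypeEquivRight key)).trans (Nat.card_eq_finsetCard _)
  rw [hcard, Nat.card_Ioc]
  omega

theorem fractional_beatty_q_eq_two (p q : ℕ) (hp : 0 < p) (hq : 0 < q)
    (hpq : Nat.Coprime p q) (α₁ α₂ : ℝ) (h1 : 0 < α₁) (h2 : 0 < α₂)
    (hi1 : Irrational α₁) (hi2 : Irrational α₂)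
    (hsum : 1 / α₁ + 1 / α₂ = (p : ℝ) / q)
    (p₁ : ℕ) (hp₁ : p₁ < q)
    (hfr₁ : (p₁ : ℝ) / q < Int.fract (1 / α₁))
    (hfr₂ : Int.fract (1 / α₁) < ((p₁ : ℝ) + 1) / q)
    (hq2 : q = 2) :
    ∀ N : ℤ, 1 ≤ N →
      (fracBeattyR α₁ α₂ N : ℤ) = ⌊(p : ℚ) / 2⌋ ∨
      (fracBeattyR α₁ α₂ N : ℤ) = ⌈(p : ℚ) / 2⌉ := by
  subst hq2
  intro N hN
  have hα1 : α₁ ≠ 0 := ne_of_gt h1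
  have hα2 : α₂ ≠ 0 := ne_of_gt h2
  -- p is odd
  obtain ⟨k, hk⟩ : ∃ k, p = 2 * k + 1 := by
    have h2p : ¬ (2 ∣ p) := by
      intro hd
      have : (2 : ℕ) ∣ Nat.gcd p 2 := Nat.dvd_gcd hd dvd_rfl
      rw [hpq] at this
      omega
    have : p % 2 = 1 := by omega
    exact ⟨p / 2, by omega⟩
  -- floor and ceiling of p/2
  have hfl : ⌊(p : ℚ) / 2⌋ = (k : ℤ) := by
    rw [Int.floor_eq_iff]
    subst hk
    push_cast
    constructor <;> linarith
  have hcl : ⌈(p : ℚ) / 2⌉ = (k : ℤ) + 1 := by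
    rw [Int.ceil_eq_iff]
    subst hk
    push_cast
    constructor <;> linarith
  -- the key bounds
  have hbound : ∀ M : ℤ, 1 ≤ M →
      M * (p : ℤ) - 4 < 2 * (⌊(M : ℝ) / α₁⌋ + ⌊(M : ℝ) / α₂⌋) ∧
      2 * (⌊(M : ℝ) / α₁⌋ + ⌊(M : ℝ) / α₂⌋) < M * (p : ℤ) := by
    intro M hM
    set x := (M : ℝ) / α₁ with hx
    set y := (M : ℝ) / α₂ with hy
    have hsum' : 1 / α₁ + 1 / α₂ = (p : ℝ) / 2 := by
      rw [hsum]; norm_num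
    have hxy : x + y = (M : ℝ) * ((p : ℝ) / 2) := by
      calc x + y = (M : ℝ) * (1 / α₁ + 1 / α₂) := by
            rw [mul_add, ← div_eq_mul_one_div, ← div_eq_mul_one_div]
        _ = (M : ℝ) * ((p : ℝ) / 2) := by rw [hsum']
    have hx1 : (⌊x⌋ : ℝ) < x := by
      refine lt_of_le_of_ne (Int.floor_le x) ?_
      exact ne_div_of_irrational hα1 hi1 (by omega) ⌊x⌋
    have hx2 : x < ⌊x⌋ + 1 := Int.lt_floor_add_one x
    have hy1 : (⌊y⌋ : ℝ) ≤ y := Int.floor_le y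
    have hy2 : y < ⌊y⌋ + 1 := Int.lt_floor_add_one y
    constructor
    · have : ((M * (p : ℤ) - 4 : ℤ) : ℝ) < ((2 * (⌊x⌋ + ⌊y⌋) : ℤ) : ℝ) := by
        push_cast
        nlinarith [hxy]
      exact_mod_cast this
    · have : ((2 * (⌊x⌋ + ⌊y⌋) : ℤ) : ℝ) < ((M * (p : ℤ) : ℤ) : ℝ) := by
        push_cast
        nlinarith [hxy]
      exact_mod_cast this
  have hr : (fracBeattyR α₁ α₂ N : ℤ)
      = (⌊((N : ℝ) + 1) / α₁⌋ - ⌊(N : ℝ) / α₁⌋) + (⌊((N : ℝ) + 1) / α₂⌋ - ⌊(N : ℝ) / α₂⌋) := by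
    rw [fracBeattyR]
    push_cast
    rw [beattyCount_eq h1 hi1 hN, beattyCount_eq h2 hi2 hN]
  obtain ⟨hA1, hA2⟩ := hbound N hN
  obtain ⟨hB1, hB2⟩ := hbound (N + 1) (by omega)
  push_cast at hB1 hB2
  have hexp : (N + 1) * (p : ℤ) = N * (p : ℤ) + (p : ℤ) := by ring
  rw [hexp] at hB1 hB2
  have hpz : (p : ℤ) = 2 * (k : ℤ) + 1 := by exact_mod_cast hk
  rw [hfl, hcl, hr]
  set a1 := ⌊(N : ℝ) / α₁⌋
  set a2 := ⌊(N : ℝ) / α₂⌋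
  set b1 := ⌊((N : ℝ) + 1) / α₁⌋
  set b2 := ⌊((N : ℝ) + 1) / α₂⌋
  set c := N * (p : ℤ) with hc
  omega
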